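/- The sum over all sets T of (k+1)-element subsets of [n] with |T| = m3 of det(∂̂_{•,T})² equals n^{m2}. (This is Kalai's weighted enumeration of ℚ-acyclic complexes, Σ_{T ∈ 𝒯_{n,k}} |H̃_{k−1}(T)|² = n^{C(n−2,k)}; the case k = 1 is Cayley's formula.) -/

import Mathlib

open Matrix

/-- The `j`-element subsets of the vertex set `[n]` (modelled as `Fin n`). -/
abbrev Face (n j : ℕ) := {s : Finset (Fin n) // s.card = j}

/-- The `j`-element subsets of `[n]` not containing the last vertex `n`
(the vertex of `Fin n` with value `n - 1`). -/
abbrev HFace (n j : ℕ) :=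
  {s : Finset (Fin n) // s.card = j ∧ ∀ a ∈ s, (a : ℕ) < n - 1}

/-- The `k`-dimensional boundary matrix `∂`: rows indexed by `k`-subsets `σ`,
columns by `(k+1)`-subsets `τ`; the entry is `(-1)^m` if `σ = τ \ {τ_m}`
(where `τ = {τ_0 < ⋯ < τ_k}`), and `0` otherwise. -/
noncomputable def bdry (n k : ℕ) : Matrix (Face n k) (Face n (k+1)) ℝ :=
  fun σ τ => ∑ a ∈ τ.1,
    if σ.1 = τ.1.erase a then (-1 : ℝ) ^ ((τ.1.filter (fun b => b < a)).card) else 0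

/-- The submatrix `∂̂` of `∂` consisting of the rows indexed by `k`-subsets
not containing the vertex `n`. -/
noncomputable def bdryHat (n k : ℕ) : Matrix (HFace n k) (Face n (k+1)) ℝ :=
  fun σ τ => bdry n k ⟨σ.1, σ.2.1⟩ τ

/-- The submatrix `M_{•,T}` of `M` with columns restricted to `T`. -/
def colSub {ι κ : Type*} (M : Matrix ι κ ℝ) (T : Finset κ) :
    Matrix ι {τ // τ ∈ T} ℝ :=
  fun i t => M i t.1

/- The squared determinant of a matrix whose row and column index types are in
bijection (`0` if there is no bijection); independent of the chosen bijection. -/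
open scoped Classical in
noncomputable def detSq {ι κ : Type*} [Fintype ι] [DecidableEq ι] [Fintype κ]
    (M : Matrix ι κ ℝ) : ℝ :=
  if h : Nonempty (ι ≃ κ) then ((M.submatrix id h.some).det) ^ 2 else 0

/-- The degree `d_i(T)`: the number of members of `T` containing the vertex `i`. -/
def deg (n k : ℕ) (T : Finset (Face n (k+1))) (i : Fin n) : ℕ :=
  (T.filter (fun τ => i ∈ τ.1)).card

/-- The diagonal matrix `X_j` indexed by `j`-subsets, with entries `∏_{i∈σ} x_i`. -/
noncomputable def Xdiag (n j : ℕ) (x : Fin n → ℝ) :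
    Matrix (Face n j) (Face n j) ℝ :=
  Matrix.diagonal (fun σ => ∏ i ∈ σ.1, x i)
/-! ### Sign lemmas -/

def eps {n : ℕ} (τ : Finset (Fin n)) (a : Fin n) : ℝ :=
  (-1) ^ ((τ.filter (fun b => b < a)).card)

lemma eps_mul_self {n : ℕ} (τ : Finset (Fin n)) (a : Fin n) : eps τ a * eps τ a = 1 := by
  rw [eps, ← pow_add, ← two_mul, pow_mul]; norm_num

lemma eps_key_lt {n : ℕ} (τ : Finset (Fin n)) {a b : Fin n} (ha : a ∈ τ) (hb : b ∈ τ)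
    (hab : a < b) :
    eps τ b * eps (τ.erase b) a = -(eps τ a * eps (τ.erase a) b) := by
  have h1 : ((τ.erase b).filter (fun c => c < a)).card = (τ.filter (fun c => c < a)).card := by
    rw [Finset.filter_erase, Finset.erase_eq_of_notMem]
    simp only [Finset.mem_filter]
    exact fun h => absurd (h.2) (by exact fun hba => absurd (hba.trans hab) (lt_irrefl b))
  have hmem : a ∈ τ.filter (fun c => c < b) := Finset.mem_filter.2 ⟨ha, hab⟩
  have h2 : ((τ.erase a).filter (fun c => c < b)).card
      = (τ.filter (fun c => c < b)).card - 1 := by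
    rw [Finset.filter_erase, Finset.card_erase_of_mem hmem]
  have hq : 1 ≤ (τ.filter (fun c => c < b)).card := Finset.card_pos.2 ⟨a, hmem⟩
  unfold eps
  rw [h1, h2, ← pow_add, ← pow_add]
  have : (τ.filter (fun c => c < b)).card + (τ.filter (fun c => c < a)).card
      = ((τ.filter (fun c => c < a)).card + ((τ.filter (fun c => c < b)).card - 1)) + 1 := by
    omega
  rw [this, pow_succ]
  ring

lemma eps_key {n : ℕ} (τ : Finset (Fin n)) {a b : Fin n} (ha : a ∈ τ) (hb : b ∈ τ)
    (hab : a ≠ b) :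
    eps τ b * eps (τ.erase b) a = -(eps τ a * eps (τ.erase a) b) := by
  rcases lt_or_gt_of_ne hab with h | h
  · exact eps_key_lt τ ha hb h
  · rw [eps_key_lt τ hb ha h]; ring

/-! ### Boundary entry lemmas -/

lemma bdry_apply_of_erase {n k : ℕ} (σ : Face n k) (τ : Face n (k+1)) {a : Fin n}
    (ha : a ∈ τ.1) (h : σ.1 = τ.1.erase a) : bdry n k σ τ = eps τ.1 a := by
  unfold bdry
  rw [Finset.sum_eq_single a]
  · rw [if_pos h]; rfl
  · intro b hbmem hba
    rw [if_neg]
    intro hb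
    have hbe : b ∈ τ.1.erase b := by
      rw [← hb, h]
      exact Finset.mem_erase.2 ⟨hba, hbmem⟩
    exact absurd hbe (Finset.notMem_erase b τ.1)
  · exact fun h' => absurd ha h'

lemma bdry_apply_of_not_subset {n k : ℕ} (σ : Face n k) (τ : Face n (k+1))
    (h : ¬ σ.1 ⊆ τ.1) : bdry n k σ τ = 0 := by
  unfold bdry
  refine Finset.sum_eq_zero fun a ha => ?_
  rw [if_neg]
  intro he
  exact h (he ▸ Finset.erase_subset a τ.1)

lemma face_subset_succ {n k : ℕ} (σ : Face n k) (τ : Face n (k+1)) (h : σ.1 ⊆ τ.1) :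
    ∃ a ∈ τ.1, a ∉ σ.1 ∧ σ.1 = τ.1.erase a ∧ τ.1 = insert a σ.1 := by
  have hcard : (τ.1 \ σ.1).card = 1 := by
    rw [Finset.card_sdiff_of_subset h, σ.2, τ.2]; omega
  obtain ⟨a, hae⟩ := Finset.card_eq_one.1 hcard
  have haτ : a ∈ τ.1 := by
    have : a ∈ τ.1 \ σ.1 := hae ▸ Finset.mem_singleton_self a
    exact (Finset.mem_sdiff.1 this).1
  have haσ : a ∉ σ.1 := by
    have : a ∈ τ.1 \ σ.1 := hae ▸ Finset.mem_singleton_self a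
    exact (Finset.mem_sdiff.1 this).2
  have hσ : σ.1 = τ.1.erase a := by
    rw [Finset.erase_eq, ← hae]
    ext x
    simp only [Finset.mem_sdiff]
    constructor
    · exact fun hx => ⟨h hx, fun hc => hc.2 hx⟩
    · rintro ⟨hxτ, hx⟩
      by_contra hxσ
      exact hx ⟨hxτ, hxσ⟩
  refine ⟨a, haτ, haσ, hσ, ?_⟩
  rw [hσ, Finset.insert_erase haτ]

/-! ### Entry products -/

lemma bdry_mul_self {n k : ℕ} (σ : Face n k) (τ : Face n (k+1)) :
    bdry n k σ τ * bdry n k σ τ = if σ.1 ⊆ τ.1 then 1 else 0 := by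
  by_cases h : σ.1 ⊆ τ.1
  · obtain ⟨a, haτ, -, hσ, -⟩ := face_subset_succ σ τ h
    rw [bdry_apply_of_erase σ τ haτ hσ, if_pos h, eps_mul_self]
  · rw [bdry_apply_of_not_subset σ τ h, if_neg h, mul_zero]

lemma sum_indicator_supersets {n k : ℕ} (σ : Face n k) :
    ∑ τ : Face n (k+1), (if σ.1 ⊆ τ.1 then (1:ℝ) else 0) = ((n - k : ℕ) : ℝ) := by
  rw [Finset.sum_boole]
  congr 1
  have : (Finset.univ.filter (fun τ : Face n (k+1) => σ.1 ⊆ τ.1)).card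
      = ((Finset.univ \ σ.1).powersetCard 1).card := by
    refine Finset.card_bij (fun τ _ => τ.1 \ σ.1) ?_ ?_ ?_
    · intro τ hτ
      rw [Finset.mem_filter] at hτ
      rw [Finset.mem_powersetCard]
      refine ⟨Finset.sdiff_subset_sdiff (Finset.subset_univ _) le_rfl, ?_⟩
      rw [Finset.card_sdiff_of_subset hτ.2, σ.2, τ.2]
      omega
    · intro τ hτ τ' hτ' h
      rw [Finset.mem_filter] at hτ hτ'
      apply Subtype.ext
      have e1 : σ.1 ∪ (τ.1 \ σ.1) = τ.1 := Finset.union_sdiff_of_subset hτ.2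
      have e2 : σ.1 ∪ (τ'.1 \ σ.1) = τ'.1 := Finset.union_sdiff_of_subset hτ'.2
      rw [← e1, ← e2, h]
    · intro u hu
      rw [Finset.mem_powersetCard] at hu
      have hdisj : Disjoint σ.1 u := by
        refine Finset.disjoint_left.2 fun a ha hau => ?_
        exact (Finset.mem_sdiff.1 (hu.1 hau)).2 ha
      have hcard : (σ.1 ∪ u).card = k + 1 := by
        rw [Finset.card_union_of_disjoint hdisj, σ.2, hu.2]
      refine ⟨⟨σ.1 ∪ u, hcard⟩, Finset.mem_filter.2 ⟨Finset.mem_univ _, Finset.subset_union_left⟩, ?_⟩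
      simp only
      rw [Finset.union_sdiff_cancel_left hdisj]
  rw [this, Finset.card_powersetCard, Finset.card_univ_diff, σ.2, Fintype.card_fin,
    Nat.choose_one_right]

lemma sum_indicator_subsets {n k : ℕ} (σ : Face n (k+1)) :
    ∑ ρ : Face n k, (if ρ.1 ⊆ σ.1 then (1:ℝ) else 0) = ((k + 1 : ℕ) : ℝ) := by
  rw [Finset.sum_boole]
  congr 1
  have : (Finset.univ.filter (fun ρ : Face n k => ρ.1 ⊆ σ.1)).card
      = (σ.1.powersetCard k).card := by
    refine Finset.card_bij (fun ρ _ => ρ.1) ?_ ?_ ?_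
    · intro ρ hρ
      rw [Finset.mem_filter] at hρ
      rw [Finset.mem_powersetCard]
      exact ⟨hρ.2, ρ.2⟩
    · intro ρ _ ρ' _ h
      exact Subtype.ext h
    · intro t ht
      rw [Finset.mem_powersetCard] at ht
      exact ⟨⟨t, ht.2⟩, Finset.mem_filter.2 ⟨Finset.mem_univ _, ht.1⟩, rfl⟩
  rw [this, Finset.card_powersetCard, σ.2, Nat.choose_succ_self_right]

/-! ### The Laplacian identity, entrywise -/

lemma prod_zero_of_not_subsets {n k l : ℕ} (σ : Face n k) (σ' : Face n l)
    (τ : Face n (k+1)) (τ' : Face n (l+1))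
    (h : ¬ (σ.1 ⊆ τ.1 ∧ σ'.1 ⊆ τ'.1)) : bdry n k σ τ * bdry n l σ' τ' = 0 := by
  rcases not_and_or.1 h with h' | h'
  · rw [bdry_apply_of_not_subset _ _ h', zero_mul]
  · rw [bdry_apply_of_not_subset _ _ h', mul_zero]

lemma lap_entry (n m : ℕ) (σ σ' : Face n (m+1)) :
    (∑ τ : Face n (m+2), bdry n (m+1) σ τ * bdry n (m+1) σ' τ)
      + (∑ ρ : Face n m, bdry n m ρ σ * bdry n m ρ σ')
    = if σ = σ' then (n : ℝ) else 0 := by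
  by_cases hσσ' : σ = σ'
  · subst hσσ'
    rw [if_pos rfl]
    have h1 : ∀ τ : Face n (m+2), bdry n (m+1) σ τ * bdry n (m+1) σ τ
        = if σ.1 ⊆ τ.1 then (1:ℝ) else 0 := fun τ => bdry_mul_self σ τ
    have h2 : ∀ ρ : Face n m, bdry n m ρ σ * bdry n m ρ σ
        = if ρ.1 ⊆ σ.1 then (1:ℝ) else 0 := fun ρ => bdry_mul_self ρ σ
    rw [Finset.sum_congr rfl (fun τ _ => h1 τ), Finset.sum_congr rfl (fun ρ _ => h2 ρ),
      sum_indicator_supersets, sum_indicator_subsets]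
    have hle : m + 1 ≤ n := by
      have := Finset.card_le_univ σ.1
      rwa [σ.2, Fintype.card_fin] at this
    rw [← Nat.cast_add, Nat.sub_add_cancel hle]
  · rw [if_neg hσσ']
    have hne : σ.1 ≠ σ'.1 := fun h => hσσ' (Subtype.ext h)
    have hlt : (σ.1 ∩ σ'.1).card < m + 1 := by
      rcases lt_or_eq_of_le (le_trans (Finset.card_le_card Finset.inter_subset_left)
        (le_of_eq σ.2)) with h | h
      · exact h
      · exfalso
        have hint : σ.1 ∩ σ'.1 = σ.1 :=
          Finset.eq_of_subset_of_card_le Finset.inter_subset_left (by rw [σ.2, h])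
        have hsub : σ.1 ⊆ σ'.1 := by rw [← hint]; exact Finset.inter_subset_right
        exact hne (Finset.eq_of_subset_of_card_le hsub (by rw [σ.2, σ'.2]))
    by_cases hc : (σ.1 ∩ σ'.1).card = m
    · -- the interesting case: exactly one exchange
      have hb1 : (σ.1 \ σ'.1).card = 1 := by
        have := Finset.card_sdiff_add_card_inter σ.1 σ'.1
        rw [σ.2, hc] at this; omega
      have ha1 : (σ'.1 \ σ.1).card = 1 := by
        have := Finset.card_sdiff_add_card_inter σ'.1 σ.1
        rw [σ'.2, Finset.inter_comm, hc] at this; omega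
      obtain ⟨b, hbe⟩ := Finset.card_eq_one.1 hb1
      obtain ⟨a, hae⟩ := Finset.card_eq_one.1 ha1
      have hbσ : b ∈ σ.1 ∧ b ∉ σ'.1 := by
        have : b ∈ σ.1 \ σ'.1 := hbe ▸ Finset.mem_singleton_self b
        exact Finset.mem_sdiff.1 this
      have haσ : a ∈ σ'.1 ∧ a ∉ σ.1 := by
        have : a ∈ σ'.1 \ σ.1 := hae ▸ Finset.mem_singleton_self a
        exact Finset.mem_sdiff.1 this
      have hab : a ≠ b := fun h => haσ.2 (h ▸ hbσ.1)
      set τu := σ.1 ∪ σ'.1 with hτu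
      have hτcard : τu.card = m + 2 := by
        rw [hτu]
        have := Finset.card_union_add_card_inter σ.1 σ'.1
        rw [σ.2, σ'.2, hc] at this; omega
      have hins_a : τu = insert a σ.1 := by
        rw [hτu, ← Finset.union_sdiff_self_eq_union, hae, Finset.union_comm, ← Finset.insert_eq]
      have hins_b : τu = insert b σ'.1 := by
        rw [hτu, Finset.union_comm, ← Finset.union_sdiff_self_eq_union, hbe,
          Finset.union_comm, ← Finset.insert_eq]
      have haτ : a ∈ τu := Finset.mem_union_right _ haσ.1
      have hbτ : b ∈ τu := Finset.mem_union_left _ hbσ.1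
      have hσe : σ.1 = τu.erase a := by rw [hins_a, Finset.erase_insert haσ.2]
      have hσ'e : σ'.1 = τu.erase b := by rw [hins_b, Finset.erase_insert hbσ.2]
      set τ₀ : Face n (m+2) := ⟨τu, hτcard⟩ with hτ₀
      have hsum1 : (∑ τ : Face n (m+2), bdry n (m+1) σ τ * bdry n (m+1) σ' τ)
          = eps τu a * eps τu b := by
        rw [Finset.sum_eq_single τ₀]
        · rw [bdry_apply_of_erase σ τ₀ haτ hσe, bdry_apply_of_erase σ' τ₀ hbτ hσ'e]
        · intro τ _ hττ₀
          by_cases hs : σ.1 ⊆ τ.1 ∧ σ'.1 ⊆ τ.1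
          · exfalso
            have hsub : τu ⊆ τ.1 := Finset.union_subset hs.1 hs.2
            have : τu = τ.1 := Finset.eq_of_subset_of_card_le hsub (by rw [τ.2, hτcard])
            exact hττ₀ (Subtype.ext this.symm)
          · exact prod_zero_of_not_subsets σ σ' τ τ hs
        · exact fun h => absurd (Finset.mem_univ τ₀) h
      set ρ₀ : Face n m := ⟨σ.1 ∩ σ'.1, hc⟩ with hρ₀
      have hρσ : ρ₀.1 = σ.1.erase b := by
        rw [hρ₀, Finset.erase_eq, ← hbe, Finset.sdiff_sdiff_self_left]
      have hρσ' : ρ₀.1 = σ'.1.erase a := by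
        show σ.1 ∩ σ'.1 = σ'.1.erase a
        rw [Finset.erase_eq, ← hae, Finset.sdiff_sdiff_self_left, Finset.inter_comm]
      have hsum2 : (∑ ρ : Face n m, bdry n m ρ σ * bdry n m ρ σ')
          = eps σ.1 b * eps σ'.1 a := by
        rw [Finset.sum_eq_single ρ₀]
        · rw [bdry_apply_of_erase ρ₀ σ hbσ.1 hρσ, bdry_apply_of_erase ρ₀ σ' haσ.1 hρσ']
        · intro ρ _ hρρ₀
          by_cases hs : ρ.1 ⊆ σ.1 ∧ ρ.1 ⊆ σ'.1
          · exfalso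
            have hsub : ρ.1 ⊆ σ.1 ∩ σ'.1 := Finset.subset_inter hs.1 hs.2
            have : ρ.1 = σ.1 ∩ σ'.1 :=
              Finset.eq_of_subset_of_card_le hsub (by rw [ρ.2, hc])
            exact hρρ₀ (Subtype.ext this)
          · exact prod_zero_of_not_subsets ρ ρ σ σ' hs
        · exact fun h => absurd (Finset.mem_univ ρ₀) h
      rw [hsum1, hsum2, hσe, hσ'e]
      have key := eps_key τu haτ hbτ hab
      have hQ := eps_mul_self τu b
      have hS := eps_mul_self (τu.erase a) b
      linear_combination (eps τu b * eps (τu.erase a) b) * key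
        - (eps (τu.erase a) b * eps (τu.erase b) a) * hQ
        - (eps τu a * eps τu b) * hS
    · -- far apart: both sums vanish
      have hsum1 : (∑ τ : Face n (m+2), bdry n (m+1) σ τ * bdry n (m+1) σ' τ) = 0 := by
        refine Finset.sum_eq_zero fun τ _ => ?_
        refine prod_zero_of_not_subsets σ σ' τ τ fun hs => ?_
        have hsub : σ.1 ∪ σ'.1 ⊆ τ.1 := Finset.union_subset hs.1 hs.2
        have h1 := Finset.card_le_card hsub
        have h2 := Finset.card_union_add_card_inter σ.1 σ'.1
        rw [σ.2, σ'.2] at h2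
        rw [τ.2] at h1
        omega
      have hsum2 : (∑ ρ : Face n m, bdry n m ρ σ * bdry n m ρ σ') = 0 := by
        refine Finset.sum_eq_zero fun ρ _ => ?_
        refine prod_zero_of_not_subsets ρ ρ σ σ' fun hs => ?_
        have hsub : ρ.1 ⊆ σ.1 ∩ σ'.1 := Finset.subset_inter hs.1 hs.2
        have := Finset.card_le_card hsub
        rw [ρ.2] at this
        omega
      rw [hsum1, hsum2, add_zero]

/-! ### `∂ ∘ ∂ = 0` -/

lemma bdry_comp_entry (n m : ℕ) (ρ : Face n m) (τ : Face n (m+2)) :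
    ∑ σ : Face n (m+1), bdry n m ρ σ * bdry n (m+1) σ τ = 0 := by
  by_cases hρτ : ρ.1 ⊆ τ.1
  · have hcard2 : (τ.1 \ ρ.1).card = 2 := by
      rw [Finset.card_sdiff_of_subset hρτ, ρ.2, τ.2]; omega
    obtain ⟨a, b, hab, habe⟩ := Finset.card_eq_two.1 hcard2
    have ha : a ∈ τ.1 ∧ a ∉ ρ.1 := by
      have : a ∈ τ.1 \ ρ.1 := habe ▸ Finset.mem_insert_self a {b}
      exact Finset.mem_sdiff.1 this
    have hb : b ∈ τ.1 ∧ b ∉ ρ.1 := by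
      have : b ∈ τ.1 \ ρ.1 := habe ▸ Finset.mem_insert_of_mem (Finset.mem_singleton_self b)
      exact Finset.mem_sdiff.1 this
    have hcards1 : (τ.1.erase b).card = m + 1 := by
      rw [Finset.card_erase_of_mem hb.1, τ.2]; omega
    have hcards2 : (τ.1.erase a).card = m + 1 := by
      rw [Finset.card_erase_of_mem ha.1, τ.2]; omega
    set σ₁ : Face n (m+1) := ⟨τ.1.erase b, hcards1⟩ with hσ₁
    set σ₂ : Face n (m+1) := ⟨τ.1.erase a, hcards2⟩ with hσ₂
    have hρab : ρ.1 = τ.1 \ {a, b} := by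
      rw [← habe, Finset.sdiff_sdiff_self_left, Finset.inter_eq_right.2 hρτ]
    have hρ1 : ρ.1 = (τ.1.erase b).erase a := by
      rw [hρab]; ext x
      simp only [Finset.mem_sdiff, Finset.mem_insert, Finset.mem_singleton, Finset.mem_erase]
      tauto
    have hρ2 : ρ.1 = (τ.1.erase a).erase b := by
      rw [hρab]; ext x
      simp only [Finset.mem_sdiff, Finset.mem_insert, Finset.mem_singleton, Finset.mem_erase]
      tauto
    have haσ₁ : a ∈ σ₁.1 := Finset.mem_erase.2 ⟨hab, ha.1⟩
    have hbσ₂ : b ∈ σ₂.1 := Finset.mem_erase.2 ⟨fun h => hab h.symm, hb.1⟩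
    have hσ₁₂ : σ₁ ≠ σ₂ := by
      intro h
      have hv : τ.1.erase b = τ.1.erase a := congrArg Subtype.val h
      exact (Finset.notMem_erase a τ.1) (hv ▸ haσ₁)
    have hvanish : ∀ σ : Face n (m+1), σ ∉ ({σ₁, σ₂} : Finset (Face n (m+1))) →
        bdry n m ρ σ * bdry n (m+1) σ τ = 0 := by
      intro σ hσ
      by_cases hs : ρ.1 ⊆ σ.1 ∧ σ.1 ⊆ τ.1
      · exfalso
        have h1 : (σ.1 \ ρ.1).card = 1 := by
          rw [Finset.card_sdiff_of_subset hs.1, σ.2, ρ.2]; omega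
        obtain ⟨x, hxe⟩ := Finset.card_eq_one.1 h1
        have hxab : x ∈ ({a, b} : Finset (Fin n)) := by
          have hx : x ∈ σ.1 \ ρ.1 := hxe ▸ Finset.mem_singleton_self x
          have : x ∈ τ.1 \ ρ.1 :=
            Finset.mem_sdiff.2 ⟨hs.2 (Finset.mem_sdiff.1 hx).1, (Finset.mem_sdiff.1 hx).2⟩
          rwa [habe] at this
        have hσval : σ.1 = insert x ρ.1 := by
          have := Finset.union_sdiff_of_subset hs.1
          rw [hxe] at this
          rw [← this, Finset.union_comm, ← Finset.insert_eq]
        rcases Finset.mem_insert.1 hxab with h | h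
        · apply hσ
          apply Finset.mem_insert.2; left
          apply Subtype.ext
          rw [hσval, h, hρ1, Finset.insert_erase haσ₁]
        · rw [Finset.mem_singleton] at h
          apply hσ
          apply Finset.mem_insert.2; right
          apply Finset.mem_singleton.2
          apply Subtype.ext
          rw [hσval, h, hρ2, Finset.insert_erase hbσ₂]
      · exact prod_zero_of_not_subsets ρ σ σ τ hs
    rw [← Finset.sum_subset (Finset.subset_univ ({σ₁, σ₂} : Finset (Face n (m+1))))
      (fun σ _ hσ => hvanish σ hσ), Finset.sum_pair hσ₁₂]
    have e1 : bdry n m ρ σ₁ = eps σ₁.1 a := bdry_apply_of_erase ρ σ₁ haσ₁ hρ1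
    have e2 : bdry n (m+1) σ₁ τ = eps τ.1 b :=
      bdry_apply_of_erase σ₁ τ hb.1 rfl
    have e3 : bdry n m ρ σ₂ = eps σ₂.1 b := bdry_apply_of_erase ρ σ₂ hbσ₂ hρ2
    have e4 : bdry n (m+1) σ₂ τ = eps τ.1 a :=
      bdry_apply_of_erase σ₂ τ ha.1 rfl
    rw [e1, e2, e3, e4]
    have key := eps_key τ.1 ha.1 hb.1 hab
    show eps (τ.1.erase b) a * eps τ.1 b + eps (τ.1.erase a) b * eps τ.1 a = 0
    linear_combination key
  · refine Finset.sum_eq_zero fun σ _ => ?_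
    by_cases hs : ρ.1 ⊆ σ.1 ∧ σ.1 ⊆ τ.1
    · exact absurd (hs.1.trans hs.2) hρτ
    · exact prod_zero_of_not_subsets ρ σ σ τ hs

/-! ### Matrix-level identities -/

lemma lap_matrix (n m : ℕ) :
    bdry n (m+1) * (bdry n (m+1))ᵀ + (bdry n m)ᵀ * bdry n m
      = (n : ℝ) • (1 : Matrix (Face n (m+1)) (Face n (m+1)) ℝ) := by
  ext σ σ'
  rw [Matrix.add_apply, Matrix.mul_apply, Matrix.mul_apply, Matrix.smul_apply]
  simp only [Matrix.transpose_apply, Matrix.one_apply]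
  rw [lap_entry n m σ σ']
  split <;> simp

lemma comp_matrix (n m : ℕ) :
    bdry n m * bdry n (m+1) = 0 := by
  ext ρ τ
  rw [Matrix.mul_apply, Matrix.zero_apply]
  exact bdry_comp_entry n m ρ τ

/-! ### The determinant recursion -/

noncomputable def gdet (n j : ℕ) : ℝ := Matrix.det (1 + bdry n j * (bdry n j)ᵀ)

instance faceZeroUnique (n : ℕ) : Unique (Face n 0) where
  default := ⟨∅, rfl⟩
  uniq := fun σ => (Subtype.ext (Finset.card_eq_zero.1 σ.2))

lemma gdet_zero (n : ℕ) : gdet n 0 = (n : ℝ) + 1 := by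
  rw [gdet, Matrix.det_unique, Matrix.add_apply, Matrix.one_apply_eq, Matrix.mul_apply]
  have : ∀ τ : Face n 1, bdry n 0 default τ * (bdry n 0)ᵀ τ default
      = if (default : Face n 0).1 ⊆ τ.1 then (1:ℝ) else 0 := by
    intro τ
    rw [Matrix.transpose_apply]
    exact bdry_mul_self default τ
  rw [Finset.sum_congr rfl (fun τ _ => this τ), sum_indicator_supersets]
  rw [Nat.sub_zero]
  ring

lemma gdet_succ_mul (n m : ℕ) :
    gdet n (m+1) * gdet n m = ((n : ℝ) + 1) ^ (n.choose (m+1)) := by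
  set B₁ := bdry n (m+1)
  set B₀ := bdry n m
  have hAC : (B₁ * B₁ᵀ) * (B₀ᵀ * B₀) = 0 := by
    calc (B₁ * B₁ᵀ) * (B₀ᵀ * B₀) = B₁ * ((B₀ * B₁)ᵀ * B₀) := by
          rw [Matrix.transpose_mul, Matrix.mul_assoc, ← Matrix.mul_assoc B₁ᵀ B₀ᵀ B₀]
      _ = 0 := by rw [comp_matrix n m]; simp
  have hprod : (1 + B₁ * B₁ᵀ) * (1 + B₀ᵀ * B₀) = ((n : ℝ) + 1) • 1 := by
    have expand : (1 + B₁ * B₁ᵀ) * (1 + B₀ᵀ * B₀)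
        = 1 + (B₁ * B₁ᵀ + B₀ᵀ * B₀) + (B₁ * B₁ᵀ) * (B₀ᵀ * B₀) := by
      noncomm_ring
    rw [expand, hAC, add_zero, lap_matrix n m, ← one_smul ℝ (1 : Matrix (Face n (m+1)) (Face n (m+1)) ℝ)]
    rw [smul_smul, ← add_smul]
    congr 1
    · ring
    · simp
  have hdet := congrArg Matrix.det hprod
  rw [Matrix.det_mul, Matrix.det_smul, Matrix.det_one, mul_one] at hdet
  have hcomm : Matrix.det (1 + B₀ᵀ * B₀) = gdet n m := by
    rw [Matrix.det_one_add_mul_comm, gdet]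
  rw [hcomm] at hdet
  rw [gdet, hdet, Fintype.card_finset_len, Fintype.card_fin]

lemma gdet_val (n : ℕ) (hn : 1 ≤ n) : ∀ j, gdet n j = ((n : ℝ) + 1) ^ ((n-1).choose j) := by
  intro j
  induction j with
  | zero => rw [gdet_zero, Nat.choose_zero_right, pow_one]
  | succ m ih =>
    have h := gdet_succ_mul n m
    rw [ih] at h
    obtain ⟨n', rfl⟩ : ∃ n', n = n' + 1 := ⟨n - 1, by omega⟩
    have hpascal : (n' + 1).choose (m+1) = n'.choose m + n'.choose (m+1) :=
      Nat.choose_succ_succ n' (m)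
    have hne : ((n' + 1 : ℕ) : ℝ) + 1 ≠ 0 := by positivity
    have hpow : (((n' + 1 : ℕ) : ℝ) + 1) ^ ((n'+1).choose (m+1))
        = (((n' + 1 : ℕ) : ℝ) + 1) ^ (n'.choose (m+1)) * (((n' + 1 : ℕ) : ℝ) + 1) ^ (n'.choose m) := by
      rw [← pow_add, hpascal]; ring_nf
    simp only [Nat.add_sub_cancel] at h ⊢
    rw [hpow] at h
    exact mul_right_cancel₀ (pow_ne_zero _ hne) h

/-! ### Transport along `Fin n ↪ Fin (n+1)` -/

def femb (n : ℕ) : Fin n ↪ Fin (n+1) := Fin.castSuccEmb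

lemma femb_val {n : ℕ} (a : Fin n) : ((femb n) a : ℕ) = (a : ℕ) := by simp [femb]

lemma femb_lt_iff {n : ℕ} (a b : Fin n) : femb n a < femb n b ↔ a < b := by
  rw [Fin.lt_def, Fin.lt_def, femb_val, femb_val]

def vlast (n : ℕ) : Fin (n+1) := ⟨n, by omega⟩

def faceMap {n : ℕ} (j : ℕ) (σ : Face n j) : Face (n+1) j :=
  ⟨σ.1.map (femb n), by rw [Finset.card_map, σ.2]⟩

lemma bdry_map_entry (n k : ℕ) (σ : Face n k) (τ : Face n (k+1)) :
    bdry (n+1) k (faceMap k σ) (faceMap (k+1) τ) = bdry n k σ τ := by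
  unfold bdry faceMap
  simp only
  rw [Finset.sum_map]
  apply Finset.sum_congr rfl
  intro a ha
  have hcond : (σ.1.map (femb n) = (τ.1.map (femb n)).erase ((femb n) a)) ↔ σ.1 = τ.1.erase a := by
    rw [← Finset.map_erase]
    exact ⟨fun h => Finset.map_injective (femb n) h, fun h => by rw [h]⟩
  have hsign : ((τ.1.map (femb n)).filter (fun b => b < (femb n) a)).card
      = (τ.1.filter (fun b => b < a)).card := by
    rw [Finset.filter_map, Finset.card_map]
    first
    | rfl
    | (congr 1
       apply Finset.filter_congr
       intro b _
       simpa [Function.comp_apply] using femb_lt_iff b a)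
  rw [if_congr hcond rfl rfl, hsign]

/-- Pull a finset of `Fin (n+1)` avoiding the last vertex down to `Fin n`. -/
def pushDown {n : ℕ} (s : Finset (Fin (n+1))) (h : ∀ a ∈ s, (a : ℕ) < n) :
    Finset (Fin n) :=
  s.attach.map ⟨fun a => (⟨(a.1 : ℕ), h a.1 a.2⟩ : Fin n),
    fun a b hab => by
      rw [Fin.ext_iff] at hab
      exact Subtype.ext (Fin.ext hab)⟩

lemma pushDown_card {n : ℕ} (s : Finset (Fin (n+1))) (h : ∀ a ∈ s, (a : ℕ) < n) :
    (pushDown s h).card = s.card := by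
  rw [pushDown, Finset.card_map, Finset.card_attach]

lemma pushDown_map {n : ℕ} (s : Finset (Fin (n+1))) (h : ∀ a ∈ s, (a : ℕ) < n) :
    (pushDown s h).map (femb n) = s := by
  ext x
  simp only [pushDown, Finset.mem_map, Finset.mem_attach, true_and, Subtype.exists,
    Function.Embedding.coeFn_mk]
  constructor
  · rintro ⟨y, ⟨a, haa, rfl⟩, rfl⟩
    convert haa using 1 <;> exact Fin.ext rfl
  · intro hx
    refine ⟨⟨(x : ℕ), h x hx⟩, ⟨x, hx, rfl⟩, ?_⟩
    apply Fin.ext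
    simp [femb]

/-- The equivalence between `k`-faces avoiding the last vertex of `[n+1]` and
`k`-faces of `[n]`. -/
def hEquiv (n j : ℕ) : HFace (n+1) j ≃ Face n j where
  toFun σ := ⟨pushDown σ.1 (fun a ha => by simpa using σ.2.2 a ha),
    by rw [pushDown_card, σ.2.1]⟩
  invFun σ := ⟨σ.1.map (femb n), by rw [Finset.card_map, σ.2],
    fun a ha => by
      obtain ⟨b, _, rfl⟩ := Finset.mem_map.1 ha
      simpa [femb] using b.2⟩
  left_inv σ := by
    apply Subtype.ext
    simp only
    rw [pushDown_map]
  right_inv σ := by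
    apply Subtype.ext
    simp only
    apply Finset.map_injective (femb n)
    rw [pushDown_map]

lemma vlast_not_mem {n j : ℕ} (σ : HFace (n+1) j) : vlast n ∉ σ.1 := by
  intro h
  have := σ.2.2 _ h
  simp [vlast] at this

lemma lt_vlast {n : ℕ} (x : Fin (n+1)) (hx : x ≠ vlast n) : x < vlast n := by
  have : (x : ℕ) ≤ n := Nat.lt_succ_iff.1 x.2
  have : (x : ℕ) < n := lt_of_le_of_ne this (fun h => hx (Fin.ext h))
  exact this

/-! ### Columns containing the last vertex -/

lemma hat_col_last {n k : ℕ} (σ : HFace (n+1) k) (τ : Face (n+1) (k+1))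
    (hv : vlast n ∈ τ.1) :
    bdryHat (n+1) k σ τ = if τ.1 = insert (vlast n) σ.1 then (-1:ℝ)^k else 0 := by
  have hvσ : vlast n ∉ σ.1 := vlast_not_mem σ
  by_cases hττ : τ.1 = insert (vlast n) σ.1
  · have hσe : σ.1 = τ.1.erase (vlast n) := by
      rw [hττ, Finset.erase_insert hvσ]
    rw [if_pos hττ]
    have := bdry_apply_of_erase (⟨σ.1, σ.2.1⟩ : Face (n+1) k) τ hv hσe
    rw [bdryHat, this]
    have hfilter : τ.1.filter (fun b => b < vlast n) = τ.1.erase (vlast n) := by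
      ext x
      simp only [Finset.mem_filter, Finset.mem_erase]
      constructor
      · exact fun h => ⟨fun he => absurd (he ▸ h.2) (lt_irrefl _), h.1⟩
      · exact fun h => ⟨h.2, lt_vlast x h.1⟩
    rw [eps, hfilter, Finset.card_erase_of_mem hv, τ.2]
    simp
  · rw [if_neg hττ, bdryHat, bdry]
    refine Finset.sum_eq_zero fun a ha => ?_
    rw [if_neg]
    intro hσa
    have hav : a = vlast n := by
      by_contra hne
      have : vlast n ∈ τ.1.erase a := Finset.mem_erase.2 ⟨fun h => hne h.symm, hv⟩
      rw [← hσa] at this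
      exact hvσ this
    subst hav
    exact hττ (by rw [hσa, Finset.insert_erase hv])

lemma hat_part1 {n k : ℕ} (σ σ' : HFace (n+1) k) :
    ∑ τ ∈ Finset.univ.filter (fun τ : Face (n+1) (k+1) => vlast n ∈ τ.1),
      bdryHat (n+1) k σ τ * bdryHat (n+1) k σ' τ = if σ = σ' then 1 else 0 := by
  have hvσ : vlast n ∉ σ.1 := vlast_not_mem σ
  have hcard : (insert (vlast n) σ.1).card = k + 1 := by
    rw [Finset.card_insert_of_notMem hvσ, σ.2.1]
  set τ₀ : Face (n+1) (k+1) := ⟨insert (vlast n) σ.1, hcard⟩ with hτ₀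
  rw [Finset.sum_eq_single_of_mem τ₀]
  · rw [hat_col_last σ τ₀ (Finset.mem_insert_self _ _),
      hat_col_last σ' τ₀ (Finset.mem_insert_self _ _), if_pos rfl]
    by_cases h : σ = σ'
    · subst h
      rw [if_pos rfl, ← pow_add, ← two_mul, pow_mul]
      simp
    · have hvσ' : vlast n ∉ σ'.1 := vlast_not_mem σ'
      have hne2 : τ₀.1 ≠ insert (vlast n) σ'.1 := by
        intro he
        apply h
        apply Subtype.ext
        calc σ.1 = (insert (vlast n) σ.1).erase (vlast n) := (Finset.erase_insert hvσ).symm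
          _ = (insert (vlast n) σ'.1).erase (vlast n) := by
              rw [show insert (vlast n) σ.1 = τ₀.1 from rfl, he]
          _ = σ'.1 := Finset.erase_insert hvσ'
      rw [if_neg hne2, mul_zero, if_neg h]
  · exact Finset.mem_filter.2 ⟨Finset.mem_univ _, Finset.mem_insert_self _ _⟩
  · intro τ hτ hττ₀
    rw [hat_col_last σ τ (Finset.mem_filter.1 hτ).2]
    rw [if_neg, zero_mul]
    intro he
    exact hττ₀ (Subtype.ext he)

lemma mem_lt_of_vlast_not_mem {n j : ℕ} (τ : Face (n+1) j) (hτ : vlast n ∉ τ.1) :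
    ∀ a ∈ τ.1, (a : ℕ) < n := by
  intro a ha
  have hne : a ≠ vlast n := fun h => hτ (h ▸ ha)
  exact lt_vlast a hne

def pushFace {n j : ℕ} (τ : Face (n+1) j) (hτ : vlast n ∉ τ.1) : Face n j :=
  ⟨pushDown τ.1 (mem_lt_of_vlast_not_mem τ hτ), by rw [pushDown_card, τ.2]⟩

lemma pushFace_map {n j : ℕ} (τ : Face (n+1) j) (hτ : vlast n ∉ τ.1) :
    (pushFace τ hτ).1.map (femb n) = τ.1 :=
  pushDown_map τ.1 (mem_lt_of_vlast_not_mem τ hτ)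

lemma hat_entry_eq {n k : ℕ} (σ : HFace (n+1) k) (τ : Face (n+1) (k+1))
    (hτ : vlast n ∉ τ.1) :
    bdryHat (n+1) k σ τ = bdry n k (hEquiv n k σ) (pushFace τ hτ) := by
  rw [← bdry_map_entry n k]
  show bdry (n+1) k ⟨σ.1, σ.2.1⟩ τ = _
  congr 1
  · apply Subtype.ext
    exact (pushDown_map σ.1 (fun a ha => by simpa using σ.2.2 a ha)).symm
  · apply Subtype.ext
    exact (pushFace_map τ hτ).symm

lemma hat_part2 {n k : ℕ} (σ σ' : HFace (n+1) k) :
    ∑ τ ∈ Finset.univ.filter (fun τ : Face (n+1) (k+1) => vlast n ∉ τ.1),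
      bdryHat (n+1) k σ τ * bdryHat (n+1) k σ' τ
    = ∑ τ' : Face n (k+1), bdry n k (hEquiv n k σ) τ' * bdry n k (hEquiv n k σ') τ' := by
  refine Finset.sum_bij
    (fun τ hτ => pushFace τ (Finset.mem_filter.1 hτ).2)
    (fun τ hτ => Finset.mem_univ _) ?_ ?_ ?_
  · intro τ hτ τ' hτ' h
    apply Subtype.ext
    have h' : pushFace τ (Finset.mem_filter.1 hτ).2 = pushFace τ' (Finset.mem_filter.1 hτ').2 := h
    rw [← pushFace_map τ (Finset.mem_filter.1 hτ).2,
      ← pushFace_map τ' (Finset.mem_filter.1 hτ').2, h']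
  · intro τ' _
    have hτ : vlast n ∉ (faceMap (k+1) τ').1 := by
      intro h
      obtain ⟨b, _, hbe⟩ := Finset.mem_map.1 h
      have : (b : ℕ) = n := by rw [← femb_val b, hbe]; rfl
      exact absurd (this ▸ b.2) (lt_irrefl _)
    refine ⟨faceMap (k+1) τ', Finset.mem_filter.2 ⟨Finset.mem_univ _, hτ⟩, ?_⟩
    apply Subtype.ext
    apply Finset.map_injective (femb n)
    rw [pushFace_map]
    rfl
  · intro τ hτ
    rw [hat_entry_eq σ τ (Finset.mem_filter.1 hτ).2,
      hat_entry_eq σ' τ (Finset.mem_filter.1 hτ).2]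

lemma det_hat (n k : ℕ) :
    Matrix.det (bdryHat (n+1) k * (bdryHat (n+1) k)ᵀ) = gdet n k := by
  have hmat : bdryHat (n+1) k * (bdryHat (n+1) k)ᵀ
      = (1 + bdry n k * (bdry n k)ᵀ).submatrix (hEquiv n k) (hEquiv n k) := by
    ext σ σ'
    rw [Matrix.mul_apply, Matrix.submatrix_apply, Matrix.add_apply, Matrix.one_apply,
      Matrix.mul_apply]
    have hsplit := Finset.sum_filter_add_sum_filter_not Finset.univ
      (fun τ : Face (n+1) (k+1) => vlast n ∈ τ.1)
      (fun τ => bdryHat (n+1) k σ τ * bdryHat (n+1) k σ' τ)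
    simp only [Matrix.transpose_apply]
    rw [← hsplit, hat_part1, hat_part2]
    have hiff : σ = σ' ↔ hEquiv n k σ = hEquiv n k σ' := by
      constructor
      · exact fun h => h ▸ rfl
      · exact fun h => (hEquiv n k).injective h
    by_cases h : σ = σ'
    · rw [if_pos h, if_pos (hiff.1 h)]
    · rw [if_neg h, if_neg (fun hc => h (hiff.2 hc))]
  rw [hmat, Matrix.det_submatrix_equiv_self, gdet]

/-! ### Cauchy–Binet -/

section CauchyBinet

open Equiv Finset

variable {ι κ : Type*} [Fintype ι] [DecidableEq ι] [Fintype κ] [DecidableEq κ]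

lemma detSq_eq_sq {κ' : Type*} [Fintype κ'] (M : Matrix ι κ' ℝ) (e : ι ≃ κ') :
    detSq M = ((M.submatrix id e).det) ^ 2 := by
  rw [detSq, dif_pos ⟨e⟩]
  set e₀ := (⟨e⟩ : Nonempty (ι ≃ κ')).some with he₀
  set f : Equiv.Perm ι := e₀.trans e.symm with hf
  have hsub : M.submatrix id ⇑e₀ = (M.submatrix id ⇑e).submatrix id ⇑f := by
    ext i j
    simp [hf]
  rw [hsub, Matrix.det_permute']
  rcases Int.units_eq_one_or (Equiv.Perm.sign f) with h | h <;> rw [h] <;> push_cast <;> ring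

lemma det_mul_aux' {M : Matrix ι κ ℝ} {N : Matrix κ ι ℝ} {p : ι → κ}
    (H : ¬Function.Injective p) :
    (∑ σ : Equiv.Perm ι, ((Equiv.Perm.sign σ : ℤ) : ℝ) * ∏ x, M (σ x) (p x) * N (p x) x) = 0 := by
  obtain ⟨i, j, hpij, hij⟩ : ∃ i j, p i = p j ∧ i ≠ j := by
    rw [Function.Injective] at H
    push_neg at H
    obtain ⟨i, j, h1, h2⟩ := H
    exact ⟨i, j, h1, h2⟩
  exact sum_involution (fun σ _ => σ * Equiv.swap i j)
    (fun σ _ => by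
      have : (∏ x, M (σ x) (p x)) = ∏ x, M ((σ * Equiv.swap i j) x) (p x) :=
        Fintype.prod_equiv (Equiv.swap i j) _ _ (by simp [Equiv.apply_swap_eq_self hpij])
      simp [this, Equiv.Perm.sign_swap hij, prod_mul_distrib])
    (fun σ _ _ => (not_congr Equiv.mul_swap_eq_iff).mpr hij)
    (fun _ _ => mem_univ _)
    (fun σ _ => Equiv.mul_swap_involutive i j σ)

lemma det_mul_expand (M : Matrix ι κ ℝ) (N : Matrix κ ι ℝ) :
    (M * N).det = ∑ p : ι → κ, ∑ σ : Equiv.Perm ι,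
      ((Equiv.Perm.sign σ : ℤ) : ℝ) * ∏ i, M (σ i) (p i) * N (p i) i := by
  simp only [Matrix.det_apply', Matrix.mul_apply, Finset.prod_univ_sum, Finset.mul_sum,
    Fintype.piFinset_univ]
  rw [Finset.sum_comm]

lemma perm_sum_eq_det_mul (A B : Matrix ι ι ℝ) :
    ∑ τ : Equiv.Perm ι, ∑ σ : Equiv.Perm ι,
      ((Equiv.Perm.sign σ : ℤ) : ℝ) * ∏ i, A (σ i) (τ i) * B (τ i) i
    = A.det * B.det := by
  rw [← Matrix.det_mul]
  rw [det_mul_expand]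
  have h2 : ∑ p : ι → ι, ∑ σ : Equiv.Perm ι,
        ((Equiv.Perm.sign σ : ℤ) : ℝ) * ∏ i, A (σ i) (p i) * B (p i) i
      = ∑ p ∈ Finset.univ.filter (fun p : ι → ι => Function.Injective p), ∑ σ : Equiv.Perm ι,
        ((Equiv.Perm.sign σ : ℤ) : ℝ) * ∏ i, A (σ i) (p i) * B (p i) i := by
    refine (sum_subset (filter_subset _ _) fun p _ hp => det_mul_aux' ?_).symm
    simpa only [mem_filter, mem_univ, true_and] using hp
  rw [h2]
  have hb : ∑ p ∈ Finset.univ.filter (fun p : ι → ι => Function.Injective p),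
        ∑ σ : Equiv.Perm ι,
        ((Equiv.Perm.sign σ : ℤ) : ℝ) * ∏ i, A (σ i) (p i) * B (p i) i
      = ∑ τ : Equiv.Perm ι, ∑ σ : Equiv.Perm ι,
        ((Equiv.Perm.sign σ : ℤ) : ℝ) * ∏ i, A (σ i) (τ i) * B (τ i) i := by
    refine (sum_bij (fun (τ : Equiv.Perm ι) (_ : τ ∈ Finset.univ) => (τ : ι → ι))
      ?_ ?_ ?_ ?_).symm
    · intro τ _
      exact mem_filter.2 ⟨mem_univ _, τ.injective⟩
    · intro τ _ τ' _ h
      exact Equiv.coe_fn_injective h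
    · intro p hp
      have hinj : Function.Injective p := (mem_filter.1 hp).2
      exact ⟨Equiv.ofBijective p (Finite.injective_iff_bijective.1 hinj), mem_univ _, rfl⟩
    · intro τ _
      rfl
  rw [hb]

theorem sum_detSq_eq (M : Matrix ι κ ℝ) :
    ∑ T ∈ Finset.univ.filter (fun T : Finset κ => T.card = Fintype.card ι),
      detSq (colSub M T) = (M * Mᵀ).det := by
  rw [det_mul_expand]
  have h2 : ∑ p : ι → κ, ∑ σ : Equiv.Perm ι,
        ((Equiv.Perm.sign σ : ℤ) : ℝ) * ∏ i, M (σ i) (p i) * Mᵀ (p i) i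
      = ∑ p ∈ Finset.univ.filter (fun p : ι → κ => Function.Injective p), ∑ σ : Equiv.Perm ι,
        ((Equiv.Perm.sign σ : ℤ) : ℝ) * ∏ i, M (σ i) (p i) * Mᵀ (p i) i := by
    refine (sum_subset (filter_subset _ _) fun p _ hp => det_mul_aux' ?_).symm
    simpa only [mem_filter, mem_univ, true_and] using hp
  rw [h2]
  have hmaps : ∀ p ∈ Finset.univ.filter (fun p : ι → κ => Function.Injective p),
      Finset.image p Finset.univ
        ∈ Finset.univ.filter (fun T : Finset κ => T.card = Fintype.card ι) := by
    intro p hp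
    have hinj : Function.Injective p := (mem_filter.1 hp).2
    refine mem_filter.2 ⟨mem_univ _, ?_⟩
    rw [Finset.card_image_of_injective _ hinj, Finset.card_univ]
  rw [← sum_fiberwise_of_maps_to hmaps
    (fun p => ∑ σ : Equiv.Perm ι, ((Equiv.Perm.sign σ : ℤ) : ℝ) * ∏ i, M (σ i) (p i) * Mᵀ (p i) i)]
  refine Finset.sum_congr rfl fun T hT => ?_
  have hTcard : T.card = Fintype.card ι := (mem_filter.1 hT).2
  have hcardT : Fintype.card ι = Fintype.card {x // x ∈ T} := by
    rw [Fintype.card_coe, hTcard]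
  set e : ι ≃ {x // x ∈ T} := Fintype.equivOfCardEq hcardT with he
  have hfiber : ∑ p ∈ (Finset.univ.filter (fun p : ι → κ => Function.Injective p)).filter
        (fun p => Finset.image p Finset.univ = T),
        ∑ σ : Equiv.Perm ι, ((Equiv.Perm.sign σ : ℤ) : ℝ) * ∏ i, M (σ i) (p i) * Mᵀ (p i) i
      = ∑ τ : Equiv.Perm ι, ∑ σ : Equiv.Perm ι,
        ((Equiv.Perm.sign σ : ℤ) : ℝ)
          * ∏ i, M (σ i) ((e (τ i) : κ)) * Mᵀ ((e (τ i) : κ)) i := by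
    refine (sum_bij (fun (τ : Equiv.Perm ι) _ => fun i => (e (τ i) : κ)) ?_ ?_ ?_ ?_).symm
    · intro τ _
      refine mem_filter.2 ⟨mem_filter.2 ⟨mem_univ _, ?_⟩, ?_⟩
      · intro x y hxy
        exact τ.injective (e.injective (Subtype.ext hxy))
      · ext x
        simp only [Finset.mem_image, Finset.mem_univ, true_and]
        constructor
        · rintro ⟨i, rfl⟩
          exact (e (τ i)).2
        · intro hx
          exact ⟨τ.symm (e.symm ⟨x, hx⟩), by simp⟩
    · intro τ _ τ' _ h
      apply Equiv.ext
      intro i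
      have := congrFun h i
      exact e.injective (Subtype.ext this)
    · intro p hp
      have hinj : Function.Injective p := (mem_filter.1 (mem_filter.1 hp).1).2
      have himg : Finset.image p Finset.univ = T := (mem_filter.1 hp).2
      have hq : ∀ i, p i ∈ T := fun i => himg ▸ Finset.mem_image_of_mem p (mem_univ i)
      have hqinj : Function.Injective (fun i => e.symm ⟨p i, hq i⟩) := by
        intro x y hxy
        have := congrArg (fun z => (e z : κ)) hxy
        simp only [Equiv.apply_symm_apply] at this
        exact hinj this
      refine ⟨Equiv.ofBijective _ (Finite.injective_iff_bijective.1 hqinj), mem_univ _, ?_⟩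
      funext i
      simp [Equiv.ofBijective_apply]
    · intro τ _
      rfl
  rw [hfiber]
  have hM' : ∑ τ : Equiv.Perm ι, ∑ σ : Equiv.Perm ι,
        ((Equiv.Perm.sign σ : ℤ) : ℝ)
          * ∏ i, M (σ i) ((e (τ i) : κ)) * Mᵀ ((e (τ i) : κ)) i
      = (M.submatrix id (fun i => (e i : κ))).det
          * (Mᵀ.submatrix (fun i => (e i : κ)) id).det :=
    perm_sum_eq_det_mul (M.submatrix id (fun i => (e i : κ)))
      (Mᵀ.submatrix (fun i => (e i : κ)) id)
  rw [hM']
  have htr : (Mᵀ.submatrix (fun i => (e i : κ)) id).det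
      = (M.submatrix id (fun i => (e i : κ))).det := by
    rw [← Matrix.transpose_submatrix, Matrix.det_transpose]
  rw [htr]
  have hcs : detSq (colSub M T) = ((M.submatrix id (fun i => (e i : κ))).det) ^ 2 := by
    rw [detSq_eq_sq (colSub M T) e]
    rfl
  rw [hcs]
  ring

end CauchyBinet

/-- Kalai's weighted enumeration of ℚ-acyclic complexes:
`Σ_{T ∈ 𝒯_{n,k}} |H̃_{k−1}(T)|² = n^{C(n−2,k)}`. -/
theorem weighted_count (n k : ℕ) (hk : 1 ≤ k) (hn : k < n) :
    ∑ T ∈ Finset.univ.filter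
        (fun T : Finset (Face n (k+1)) => T.card = (n-1).choose k),
        detSq (colSub (bdryHat n k) T)
      = (n : ℝ) ^ ((n-2).choose k) := by
  obtain ⟨n', rfl⟩ : ∃ n', n = n' + 1 := ⟨n - 1, by omega⟩
  have hn' : 1 ≤ n' := by omega
  have hrw : (n' + 1 - 1).choose k = Fintype.card (HFace (n'+1) k) := by
    rw [Fintype.card_congr (hEquiv n' k), Fintype.card_finset_len, Fintype.card_fin]
    norm_num
  simp only [hrw]
  rw [sum_detSq_eq (bdryHat (n'+1) k)]
  rw [det_hat n' k, gdet_val n' hn' k]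
  have h2 : n' + 1 - 2 = n' - 1 := by omega
  rw [h2]
  push_cast
  ring
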